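/- Let $F: \mathbb{R}^n_{>0} \to \mathbb{R}$ be a $C^1$ convex function, and let $\Omega \subseteq \mathbb{R}^n_{>0}$ be an open set on which $F$ is $C^2$ with Hessian positive semi-definite of rank $n-1$ and kernel spanned by the position vector $x$ at each point $x \in \Omega$. If $x, y \in \Omega$ satisfy $\nabla F(x) = \nabla F(y) = 0$ and $y$ is not a positive scalar multiple of $x$, then a contradiction arises; i.e., any two critical points of $F$ in $\Omega$ are positive scalar multiples of each other. -/

import Mathlib

open Set

theorem stmt_17 {n : ℕ} (F : (Fin n → ℝ) → ℝ) (Ω : Set (Fin n → ℝ))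
    (hΩopen : IsOpen Ω) (hΩsub : Ω ⊆ {x | ∀ i, 0 < x i})
    (hconv : ConvexOn ℝ {x | ∀ i, 0 < x i} F)
    (hC1 : ContDiffOn ℝ 1 F {x : Fin n → ℝ | ∀ i, 0 < x i})
    (hC2 : ContDiffOn ℝ 2 F Ω)
    (hsemi : ∀ x ∈ Ω, ∀ v : Fin n → ℝ,
      0 ≤ fderiv ℝ (fderiv ℝ F) x v v ∧
      (fderiv ℝ (fderiv ℝ F) x v v = 0 ↔ ∃ t : ℝ, v = t • x))
    (x y : Fin n → ℝ) (hx : x ∈ Ω) (hy : y ∈ Ω)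
    (hgx : fderiv ℝ F x = 0) (hgy : fderiv ℝ F y = 0) :
    ∃ c : ℝ, 0 < c ∧ y = c • x := by
  classical
  set S : Set (Fin n → ℝ) := {x | ∀ i, 0 < x i} with hSdef
  have hSopen : IsOpen S := by
    have : S = ⋂ i, (fun z : Fin n → ℝ => z i) ⁻¹' Set.Ioi 0 := by
      ext z; simp [hSdef]
    rw [this]
    exact isOpen_iInter_of_finite fun i => isOpen_Ioi.preimage (continuous_apply i)
  have hxS : x ∈ S := hΩsub hx
  have hyS : y ∈ S := hΩsub hy
  -- any critical point of F in S is a global minimum on S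
  have hmin : ∀ z ∈ S, fderiv ℝ F z = 0 → ∀ w ∈ S, F z ≤ F w := by
    intro z hz hz' w hw
    have hdz : DifferentiableAt ℝ F z :=
      (hC1.contDiffAt (hSopen.mem_nhds hz)).differentiableAt one_ne_zero
    have h0 : HasFDerivAt F (0 : (Fin n → ℝ) →L[ℝ] ℝ) z := hz' ▸ hdz.hasFDerivAt
    set L : ℝ →ᵃ[ℝ] (Fin n → ℝ) := AffineMap.lineMap z w with hL
    have hgconv : ConvexOn ℝ (L ⁻¹' S) (F ∘ L) := hconv.comp_affineMap L
    have hLfun : (fun t : ℝ => L t) = fun t : ℝ => t • (w - z) + z := by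
      funext t; simp [hL, AffineMap.lineMap_apply]
    have hcL : HasDerivAt (fun t : ℝ => L t) (w - z) 0 := by
      rw [hLfun]
      simpa using ((hasDerivAt_id (0 : ℝ)).smul_const (w - z)).add_const z
    have hL0 : L (0 : ℝ) = z := AffineMap.lineMap_apply_zero z w
    have hL1 : L (1 : ℝ) = w := AffineMap.lineMap_apply_one z w
    have hg : HasDerivAt (F ∘ fun t : ℝ => L t) 0 (0 : ℝ) := by
      have h0' : HasFDerivAt F (0 : (Fin n → ℝ) →L[ℝ] ℝ) ((fun t : ℝ => L t) 0) := by
        simpa [hL0] using h0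
      simpa using h0'.comp_hasDerivAt 0 hcL
    have h01 : (0 : ℝ) ∈ L ⁻¹' S := by simpa [Set.mem_preimage, hL0] using hz
    have h11 : (1 : ℝ) ∈ L ⁻¹' S := by simpa [Set.mem_preimage, hL1] using hw
    have hs := hgconv.le_slope_of_hasDerivAt h01 h11 one_pos hg
    have : slope (F ∘ fun t : ℝ => L t) 0 1 = F w - F z := by
      simp [slope_def_field, hL0, hL1]
    rw [this] at hs; linarith
  have hFyx : F y = F x :=
    le_antisymm (hmin y hyS hgy x hxS) (hmin x hxS hgx y hyS)
  -- the segment map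
  set c : ℝ → (Fin n → ℝ) := fun t => x + t • (y - x) with hcdef
  have hcS : ∀ t ∈ Icc (0 : ℝ) 1, c t ∈ S := by
    intro t ht i
    have h1 : 0 < x i := hxS i
    have h2 : 0 < y i := hyS i
    have : c t i = x i + t * (y i - x i) := by simp [hcdef]
    rw [this]
    rcases eq_or_lt_of_le ht.1 with h0 | h0
    · simp [← h0]; exact h1
    · nlinarith [mul_pos h0 h2, mul_nonneg (sub_nonneg.2 ht.2) h1.le]
  have hceq : ∀ t : ℝ, c t = (1 - t) • x + t • y := by
    intro t; funext i; simp [hcdef]; ring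
  have hFc : ∀ t ∈ Icc (0 : ℝ) 1, F (c t) = F x := by
    intro t ht
    have hle : F (c t) ≤ F x := by
      have := hconv.2 hxS hyS (by linarith [ht.2] : (0:ℝ) ≤ 1 - t) ht.1 (by ring)
      rw [← hceq t] at this
      calc F (c t) ≤ (1 - t) • F x + t • F y := this
        _ = F x := by rw [hFyx]; simp; ring
    exact le_antisymm hle (hmin x hxS hgx _ (hcS t ht))
  have hcrit : ∀ t ∈ Icc (0 : ℝ) 1, fderiv ℝ F (c t) = 0 := by
    intro t ht
    have hloc : IsLocalMin F (c t) := by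
      filter_upwards [hSopen.mem_nhds (hcS t ht)] with w hw
      rw [hFc t ht]; exact hmin x hxS hgx w hw
    exact hloc.fderiv_eq_zero
  -- a small interval around 0 mapping into Ω
  have hc0 : c 0 = x := by simp [hcdef]
  have hccont : Continuous c := by
    apply continuous_const.add
    exact (continuous_id.smul continuous_const)
  have hpre : IsOpen (c ⁻¹' Ω) := hΩopen.preimage hccont
  have h0pre : (0 : ℝ) ∈ c ⁻¹' Ω := by simp [Set.mem_preimage, hc0]; exact hx
  obtain ⟨ε, hε, hball⟩ := Metric.isOpen_iff.mp hpre 0 h0pre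
  set δ : ℝ := min ε 1 with hδ
  have hδpos : 0 < δ := lt_min hε one_pos
  set ψ : ℝ → ℝ := fun t => fderiv ℝ F (c t) (y - x) with hψdef
  have hψ0 : ∀ t ∈ Ico (0 : ℝ) δ, ψ t = 0 := by
    intro t ht
    have ht1 : t ∈ Icc (0 : ℝ) 1 :=
      ⟨ht.1, le_of_lt (lt_of_lt_of_le ht.2 (min_le_right _ _))⟩
    simp [hψdef, hcrit t ht1]
  -- derivative of ψ at 0
  have hG : DifferentiableAt ℝ (fderiv ℝ F) x := by
    have h2 : ContDiffAt ℝ 2 F x := hC2.contDiffAt (hΩopen.mem_nhds hx)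
    exact (h2.fderiv_right (m := 1) (by norm_num)).differentiableAt one_ne_zero
  have hcder : HasDerivAt c (y - x) 0 := by
    rw [hcdef]
    simpa using (((hasDerivAt_id (0 : ℝ)).smul_const (y - x)).const_add x)
  have hGc : HasDerivAt (fun t => fderiv ℝ F (c t)) (fderiv ℝ (fderiv ℝ F) x (y - x)) 0 := by
    have hG' : HasFDerivAt (fderiv ℝ F) (fderiv ℝ (fderiv ℝ F) x) (c 0) := by
      rw [hc0]; exact hG.hasFDerivAt
    exact hG'.comp_hasDerivAt 0 hcder
  have Hψ : HasDerivAt ψ (fderiv ℝ (fderiv ℝ F) x (y - x) (y - x)) 0 := by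
    have := hGc.clm_apply (hasDerivAt_const (0 : ℝ) (y - x))
    simpa [hψdef] using this
  -- ψ vanishes on the right of 0, so its derivative at 0 is 0
  have hev : ψ =ᶠ[nhdsWithin (0 : ℝ) (Ici 0)] (fun _ => (0 : ℝ)) := by
    have hmem : Ico (0 : ℝ) δ ∈ nhdsWithin (0 : ℝ) (Ici 0) :=
      Ico_mem_nhdsGE_of_mem ⟨le_refl 0, hδpos⟩
    filter_upwards [hmem] with t ht
    exact hψ0 t ht
  have hW0 : HasDerivWithinAt ψ 0 (Ici (0 : ℝ)) 0 := by
    refine (hasDerivWithinAt_const (0 : ℝ) (Ici (0 : ℝ)) (0 : ℝ)).congr_of_eventuallyEq hev ?_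
    exact hψ0 0 ⟨le_refl 0, hδpos⟩
  have hDzero : fderiv ℝ (fderiv ℝ F) x (y - x) (y - x) = 0 := by
    have h1 := Hψ.hasDerivWithinAt.derivWithin ((uniqueDiffOn_Ici (0:ℝ)) 0 Set.self_mem_Ici)
    have h2 := hW0.derivWithin ((uniqueDiffOn_Ici (0:ℝ)) 0 Set.self_mem_Ici)
    rw [h1] at h2; exact h2
  obtain ⟨t, ht⟩ := ((hsemi x hx (y - x)).2).mp hDzero
  have heq : y = (1 + t) • x := by
    funext i
    have h := congrFun ht i
    simp only [Pi.sub_apply, Pi.smul_apply, smul_eq_mul] at h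
    simp only [Pi.smul_apply, smul_eq_mul]
    linarith
  rcases Nat.eq_zero_or_pos n with hn | hn
  · refine ⟨1, one_pos, ?_⟩
    funext i
    exact absurd i.2 (by omega)
  · refine ⟨1 + t, ?_, heq⟩
    have i : Fin n := ⟨0, hn⟩
    have hxi : 0 < x i := hxS i
    have hyi : 0 < y i := hyS i
    have : y i = (1 + t) * x i := by rw [heq]; simp
    nlinarith
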